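/- arXiv:2106.14229 — 2 statements merged into one kernel-verified Lean document; each statement's English description precedes it below -/
import Mathlib

section
/- Let d and k be positive integers with 1 ≤ k ≤ d, set r = √((d − k)/d), and let G ≥ 0. Let (g^{(t)})_{t≥1} be vectors in ℝ^d with ‖g^{(t)}‖ ≤ G for all t. Define the error-accumulation sequence Δ^{(1)} = 0 and Δ^{(t+1)} = (g^{(t)} + Δ^{(t)}) − sp(g^{(t)} + Δ^{(t)}, k) for t ≥ 1, where sp(x, k) keeps k entries of x of largest absolute value and zeroes the rest. Then for every t ≥ 1, ‖Δ^{(t+1)}‖ ≤ ((r − r^{t+1})/(1 − r))·G, where r^{t} denotes the t-th power of r. -/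
lemma sparsify_norm_le (d k : ℕ) (hk1 : 1 ≤ k) (hkd : k ≤ d)
    (x y : EuclideanSpace ℝ (Fin d)) (S : Finset (Fin d)) (hcard : S.card = k)
    (hord : ∀ i ∈ S, ∀ j ∉ S, |x j| ≤ |x i|)
    (hy : ∀ i, y i = if i ∈ S then 0 else x i) :
    ‖y‖ ≤ Real.sqrt (((d : ℝ) - k) / d) * ‖x‖ := by
  have hd : (0:ℝ) < d := by
    have : (1:ℕ) ≤ d := le_trans hk1 hkd
    exact_mod_cast this
  have hS : S.Nonempty := Finset.card_pos.mp (by omega)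
  set m := S.inf' hS (fun i => |x i|) with hm
  have hm0 : 0 ≤ m := Finset.le_inf' hS _ (fun i _ => abs_nonneg (x i))
  have hA : (k : ℝ) * m ^ 2 ≤ ∑ i ∈ S, x i ^ 2 := by
    have : ∀ i ∈ S, m ^ 2 ≤ x i ^ 2 := by
      intro i hi
      have h1 : m ≤ |x i| := Finset.inf'_le _ hi
      have := sq_abs (x i)
      nlinarith [abs_nonneg (x i)]
    calc (k : ℝ) * m ^ 2 = ∑ _i ∈ S, m ^ 2 := by
          rw [Finset.sum_const, hcard]; ring
      _ ≤ ∑ i ∈ S, x i ^ 2 := Finset.sum_le_sum this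
  have hB : ∑ i ∈ Sᶜ, x i ^ 2 ≤ ((d : ℝ) - k) * m ^ 2 := by
    have hcc : (Sᶜ : Finset (Fin d)).card = d - k := by
      rw [Finset.card_compl, hcard]; simp
    have : ∀ j ∈ Sᶜ, x j ^ 2 ≤ m ^ 2 := by
      intro j hj
      have hj' : j ∉ S := Finset.mem_compl.mp hj
      have h1 : |x j| ≤ m := Finset.le_inf' hS _ (fun i hi => hord i hi j hj')
      have := sq_abs (x j)
      nlinarith [abs_nonneg (x j)]
    calc ∑ i ∈ Sᶜ, x i ^ 2 ≤ ∑ _i ∈ Sᶜ, m ^ 2 := Finset.sum_le_sum this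
      _ = ((d : ℝ) - k) * m ^ 2 := by
          rw [Finset.sum_const, hcc, nsmul_eq_mul, Nat.cast_sub hkd]
  have hT : ∑ i, x i ^ 2 = (∑ i ∈ S, x i ^ 2) + ∑ i ∈ Sᶜ, x i ^ 2 := by
    rw [Finset.sum_add_sum_compl]
  have hy2 : ∑ i, y i ^ 2 = ∑ i ∈ Sᶜ, x i ^ 2 := by
    rw [← Finset.sum_add_sum_compl S (fun i => y i ^ 2)]
    have h1 : ∑ i ∈ S, y i ^ 2 = 0 := by
      apply Finset.sum_eq_zero; intro i hi; rw [hy i, if_pos hi]; ring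
    have h2 : ∑ i ∈ Sᶜ, y i ^ 2 = ∑ i ∈ Sᶜ, x i ^ 2 := by
      apply Finset.sum_congr rfl; intro i hi
      rw [hy i, if_neg (Finset.mem_compl.mp hi)]
    rw [h1, h2, zero_add]
  have key : ∑ i, y i ^ 2 ≤ (((d : ℝ) - k) / d) * ∑ i, x i ^ 2 := by
    rw [hy2, hT, div_mul_eq_mul_div, le_div_iff₀ hd]
    have hk' : (1:ℝ) ≤ k := by exact_mod_cast hk1
    have hkd' : (k:ℝ) ≤ d := by exact_mod_cast hkd
    nlinarith [hA, hB]
  have hxnorm : ‖x‖ = Real.sqrt (∑ i, x i ^ 2) := by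
    rw [EuclideanSpace.norm_eq]; congr 1; apply Finset.sum_congr rfl
    intro i _; rw [Real.norm_eq_abs, sq_abs]
  have hynorm : ‖y‖ = Real.sqrt (∑ i, y i ^ 2) := by
    rw [EuclideanSpace.norm_eq]; congr 1; apply Finset.sum_congr rfl
    intro i _; rw [Real.norm_eq_abs, sq_abs]
  have hnn : (0:ℝ) ≤ ((d : ℝ) - k) / d := div_nonneg (sub_nonneg.mpr (by exact_mod_cast hkd)) hd.le
  rw [hxnorm, hynorm, ← Real.sqrt_mul hnn]
  exact Real.sqrt_le_sqrt key

/-- Geometric bound on the error-accumulation sequence of top-`k`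
sparsification with error feedback. -/
theorem stmt_7 (d k : ℕ) (hk1 : 1 ≤ k) (hkd : k ≤ d)
    (r : ℝ) (hr : r = Real.sqrt (((d : ℝ) - k) / d))
    (G : ℝ) (hG : 0 ≤ G)
    (g Δ : ℕ → EuclideanSpace ℝ (Fin d))
    (hg : ∀ t ≥ 1, ‖g t‖ ≤ G)
    (hΔ1 : Δ 1 = 0)
    (hΔ : ∀ t ≥ 1, ∃ S : Finset (Fin d), S.card = k ∧
      (∀ i ∈ S, ∀ j ∉ S, |(g t + Δ t) j| ≤ |(g t + Δ t) i|) ∧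
      ∀ i, Δ (t + 1) i = if i ∈ S then 0 else (g t + Δ t) i) :
    ∀ t ≥ 1, ‖Δ (t + 1)‖ ≤ ((r - r ^ (t + 1)) / (1 - r)) * G := by
  have hd : (0:ℝ) < d := by
    have : (1:ℕ) ≤ d := le_trans hk1 hkd
    exact_mod_cast this
  have hk' : (1:ℝ) ≤ k := by exact_mod_cast hk1
  have hkd' : (k:ℝ) ≤ d := by exact_mod_cast hkd
  have hr0 : 0 ≤ r := hr ▸ Real.sqrt_nonneg _
  have hr1 : r < 1 := by
    rw [hr]
    have : ((d : ℝ) - k) / d < 1 := by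
      rw [div_lt_one hd]; linarith
    calc Real.sqrt (((d : ℝ) - k) / d) < Real.sqrt 1 :=
          Real.sqrt_lt_sqrt (div_nonneg (by linarith) hd.le) this
      _ = 1 := Real.sqrt_one
  have h1r : 0 < 1 - r := by linarith
  -- stronger claim: bound on Δ t for all t ≥ 1
  have main : ∀ t ≥ 1, ‖Δ t‖ ≤ ((r - r ^ t) / (1 - r)) * G := by
    intro t ht
    induction t, ht using Nat.le_induction with
    | base => simp [hΔ1]
    | succ t ht ih =>
      obtain ⟨S, hcard, hord, hy⟩ := hΔ t ht
      have step : ‖Δ (t + 1)‖ ≤ r * ‖g t + Δ t‖ := by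
        rw [hr]
        exact sparsify_norm_le d k hk1 hkd (g t + Δ t) (Δ (t+1)) S hcard hord hy
      have h2 : ‖g t + Δ t‖ ≤ G + ‖Δ t‖ :=
        le_trans (norm_add_le _ _) (by linarith [hg t ht])
      have h3 : ‖Δ (t+1)‖ ≤ r * (G + ((r - r ^ t) / (1 - r)) * G) := by
        calc ‖Δ (t+1)‖ ≤ r * ‖g t + Δ t‖ := step
          _ ≤ r * (G + ‖Δ t‖) := by nlinarith
          _ ≤ r * (G + ((r - r ^ t) / (1 - r)) * G) := by nlinarith
      have heq : r * (G + ((r - r ^ t) / (1 - r)) * G)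
          = ((r - r ^ (t + 1)) / (1 - r)) * G := by
        field_simp
        ring
      linarith [heq ▸ h3]
  intro t ht
  exact main (t + 1) (by omega)
end

section
/- Let d, k be positive integers with 1 ≤ k ≤ d, r = √((d − k)/d), G ≥ 0, and M a positive integer. For each device m ∈ {1, …, M}, let (g_m^{(t)})_{t≥1} be vectors in ℝ^d with ‖g_m^{(t)}‖ ≤ G for all t, define Δ_m^{(1)} = 0 and Δ_m^{(t+1)} = (g_m^{(t)} + Δ_m^{(t)}) − sp(g_m^{(t)} + Δ_m^{(t)}, k), where sp(x, k) keeps k entries of x of largest absolute value and zeroes the rest. Let K_1, …, K_M ≥ 0 with ∑_m K_m > 0, and define the sparsification error e₁^{(t)} = (∑_{m=1}^M K_m (Δ_m^{(t+1)} − Δ_m^{(t)})) / (∑_{m=1}^M K_m). Then for every t ≥ 1, ‖e₁^{(t)}‖² ≤ ((2r − r^{t} − r^{t+1})/(1 − r))²·G². -/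
lemma spars_core {d k : ℕ} (hd : 0 < d) (hk : 0 < k) (hkd : k ≤ d)
    (x y : EuclideanSpace ℝ (Fin d)) (S : Finset (Fin d)) (hS : S.card = k)
    (hmax : ∀ i ∈ S, ∀ j ∉ S, |x j| ≤ |x i|)
    (hy : ∀ i, y i = if i ∈ S then 0 else x i) :
    ‖y‖ ≤ Real.sqrt (((d : ℝ) - k) / d) * ‖x‖ := by
  have hA0 : (0:ℝ) ≤ ∑ i ∈ Sᶜ, x i ^ 2 := Finset.sum_nonneg fun i _ => sq_nonneg _
  have hB0 : (0:ℝ) ≤ ∑ i ∈ S, x i ^ 2 := Finset.sum_nonneg fun i _ => sq_nonneg _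
  have hcard : (Sᶜ.card : ℝ) = (d : ℝ) - k := by
    rw [Finset.card_compl S, hS]
    simp [Nat.cast_sub hkd]
  have hAB : (k:ℝ) * ∑ i ∈ Sᶜ, x i ^ 2 ≤ ((d:ℝ) - k) * ∑ i ∈ S, x i ^ 2 := by
    have h1 : ∑ j ∈ Sᶜ, ∑ _i ∈ S, x j ^ 2 ≤ ∑ j ∈ Sᶜ, ∑ i ∈ S, x i ^ 2 := by
      refine Finset.sum_le_sum fun j hj => Finset.sum_le_sum fun i hi => ?_
      have h := hmax i hi j (Finset.mem_compl.mp hj)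
      calc x j ^ 2 = |x j| ^ 2 := (sq_abs _).symm
        _ ≤ |x i| ^ 2 := pow_le_pow_left₀ (abs_nonneg _) h 2
        _ = x i ^ 2 := sq_abs _
    have h2 : ∑ j ∈ Sᶜ, ∑ _i ∈ S, x j ^ 2 = (k:ℝ) * ∑ i ∈ Sᶜ, x i ^ 2 := by
      rw [Finset.mul_sum]
      exact Finset.sum_congr rfl fun j _ => by rw [Finset.sum_const, hS, nsmul_eq_mul]
    have h3 : ∑ _j ∈ Sᶜ, ∑ i ∈ S, x i ^ 2 = ((d:ℝ) - k) * ∑ i ∈ S, x i ^ 2 := by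
      rw [Finset.sum_const, nsmul_eq_mul, hcard]
    rw [← h2, ← h3]; exact h1
  have hxsum : ∑ i, x i ^ 2 = (∑ i ∈ S, x i ^ 2) + ∑ i ∈ Sᶜ, x i ^ 2 :=
    (Finset.sum_add_sum_compl S _).symm
  have hysum : ∑ i, y i ^ 2 = ∑ i ∈ Sᶜ, x i ^ 2 := by
    rw [← Finset.sum_add_sum_compl S]
    have h1 : ∑ i ∈ S, y i ^ 2 = 0 := Finset.sum_eq_zero fun i hi => by simp [hy, hi]
    have h2 : ∑ i ∈ Sᶜ, y i ^ 2 = ∑ i ∈ Sᶜ, x i ^ 2 :=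
      Finset.sum_congr rfl fun i hi => by simp [hy, Finset.mem_compl.mp hi]
    rw [h1, h2, zero_add]
  have key : ∑ i, y i ^ 2 ≤ (((d:ℝ) - k) / d) * ∑ i, x i ^ 2 := by
    rw [hysum, hxsum, div_mul_eq_mul_div, le_div_iff₀ (by positivity)]
    have hk' : (0:ℝ) < k := by positivity
    have hdk : (k:ℝ) ≤ d := by exact_mod_cast hkd
    nlinarith [hAB, hA0, hB0]
  have hnx : ‖x‖ = Real.sqrt (∑ i, x i ^ 2) := by
    rw [EuclideanSpace.norm_eq]
    congr 1
    exact Finset.sum_congr rfl fun i _ => by rw [Real.norm_eq_abs, sq_abs]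
  have hny : ‖y‖ = Real.sqrt (∑ i, y i ^ 2) := by
    rw [EuclideanSpace.norm_eq]
    congr 1
    exact Finset.sum_congr rfl fun i _ => by rw [Real.norm_eq_abs, sq_abs]
  have hdk : (k:ℝ) ≤ d := by exact_mod_cast hkd
  rw [hnx, hny, ← Real.sqrt_mul (div_nonneg (sub_nonneg.mpr hdk) (Nat.cast_nonneg d))]
  exact Real.sqrt_le_sqrt key

/-- Sparsification-error bound (32): the weighted average of the increments of
the per-device error-accumulation sequences is geometrically bounded. -/
theorem stmt_8 (d k : ℕ) (hk1 : 1 ≤ k) (hkd : k ≤ d)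
    (r : ℝ) (hr : r = Real.sqrt (((d : ℝ) - k) / d))
    (G : ℝ) (hG : 0 ≤ G) (M : ℕ) (hM : 0 < M)
    (g Δ : Fin M → ℕ → EuclideanSpace ℝ (Fin d))
    (hg : ∀ m, ∀ t ≥ 1, ‖g m t‖ ≤ G)
    (hΔ1 : ∀ m, Δ m 1 = 0)
    (hΔ : ∀ m, ∀ t ≥ 1, ∃ S : Finset (Fin d), S.card = k ∧
      (∀ i ∈ S, ∀ j ∉ S, |(g m t + Δ m t) j| ≤ |(g m t + Δ m t) i|) ∧
      ∀ i, Δ m (t + 1) i = if i ∈ S then 0 else (g m t + Δ m t) i)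
    (K : Fin M → ℝ) (hK : ∀ m, 0 ≤ K m) (hKpos : 0 < ∑ m, K m)
    (e₁ : ℕ → EuclideanSpace ℝ (Fin d))
    (he₁ : ∀ t, e₁ t = (∑ m, K m)⁻¹ • ∑ m, K m • (Δ m (t + 1) - Δ m t)) :
    ∀ t ≥ 1, ‖e₁ t‖ ^ 2 ≤ ((2 * r - r ^ t - r ^ (t + 1)) / (1 - r)) ^ 2 * G ^ 2 := by
  have hd : 0 < d := lt_of_lt_of_le hk1 hkd
  have hdk : (k:ℝ) ≤ d := by exact_mod_cast hkd
  have hr0 : 0 ≤ r := hr ▸ Real.sqrt_nonneg _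
  have hr1 : r < 1 := by
    rw [hr]
    have h1 : ((d:ℝ) - k) / d < 1 := by
      rw [div_lt_one (by positivity)]
      have : (1:ℝ) ≤ k := by exact_mod_cast hk1
      linarith
    calc Real.sqrt (((d:ℝ) - k) / d) < Real.sqrt 1 :=
          Real.sqrt_lt_sqrt (div_nonneg (sub_nonneg.mpr hdk) (Nat.cast_nonneg d)) h1
      _ = 1 := Real.sqrt_one
  have h1r : (0:ℝ) < 1 - r := by linarith
  -- per-device bound on ‖Δ m t‖
  have hDbound : ∀ m, ∀ t, 1 ≤ t → ‖Δ m t‖ ≤ G * (r - r ^ t) / (1 - r) := by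
    intro m t ht
    induction t, ht using Nat.le_induction with
    | base => simp [hΔ1 m]
    | succ t ht ih =>
      obtain ⟨S, hScard, hSmax, hSdef⟩ := hΔ m t ht
      have hstep : ‖Δ m (t + 1)‖ ≤ r * ‖g m t + Δ m t‖ := by
        rw [hr]
        exact spars_core hd hk1 hkd (g m t + Δ m t) (Δ m (t+1)) S hScard hSmax hSdef
      have hx : ‖g m t + Δ m t‖ ≤ G + G * (r - r ^ t) / (1 - r) :=
        le_trans (norm_add_le _ _) (add_le_add (hg m t ht) ih)
      have := le_trans hstep (mul_le_mul_of_nonneg_left hx hr0)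
      have heq : r * (G + G * (r - r ^ t) / (1 - r)) = G * (r - r ^ (t + 1)) / (1 - r) := by
        field_simp
        ring
      linarith [this, heq ▸ this]
  intro t ht
  set C : ℝ := G * (2 * r - r ^ t - r ^ (t + 1)) / (1 - r) with hC
  have hvb : ∀ m : Fin M, ‖Δ m (t + 1) - Δ m t‖ ≤ C := by
    intro m
    have h1 := hDbound m t ht
    have h2 := hDbound m (t + 1) (le_trans ht (Nat.le_succ t))
    have := le_trans (norm_sub_le _ _) (add_le_add h2 h1)
    have heq : G * (r - r ^ (t + 1)) / (1 - r) + G * (r - r ^ t) / (1 - r) = C := by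
      rw [hC]; field_simp; ring
    linarith [heq ▸ this]
  have hC0 : 0 ≤ C := by
    have h1 : r ^ t ≤ r := by
      calc r ^ t ≤ r ^ 1 := pow_le_pow_of_le_one hr0 hr1.le ht
        _ = r := pow_one r
    have h2 : r ^ (t + 1) ≤ r := by
      calc r ^ (t+1) ≤ r ^ 1 := pow_le_pow_of_le_one hr0 hr1.le (le_trans ht (Nat.le_succ t))
        _ = r := pow_one r
    rw [hC]
    apply div_nonneg _ h1r.le
    apply mul_nonneg hG
    linarith
  have hne : ‖e₁ t‖ ≤ C := by
    rw [he₁ t]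
    calc ‖(∑ m, K m)⁻¹ • ∑ m, K m • (Δ m (t + 1) - Δ m t)‖
        = (∑ m, K m)⁻¹ * ‖∑ m, K m • (Δ m (t + 1) - Δ m t)‖ := by
          rw [norm_smul, Real.norm_eq_abs, abs_of_nonneg (inv_nonneg.mpr hKpos.le)]
      _ ≤ (∑ m, K m)⁻¹ * ∑ m, K m * C := by
          apply mul_le_mul_of_nonneg_left _ (inv_nonneg.mpr hKpos.le)
          refine le_trans (norm_sum_le _ _) (Finset.sum_le_sum fun m _ => ?_)
          rw [norm_smul, Real.norm_eq_abs, abs_of_nonneg (hK m)]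
          exact mul_le_mul_of_nonneg_left (hvb m) (hK m)
      _ = C := by rw [← Finset.sum_mul, ← mul_assoc, inv_mul_cancel₀ hKpos.ne', one_mul]
  calc ‖e₁ t‖ ^ 2 ≤ C ^ 2 := pow_le_pow_left₀ (norm_nonneg _) hne 2
    _ = ((2 * r - r ^ t - r ^ (t + 1)) / (1 - r)) ^ 2 * G ^ 2 := by
        rw [hC]; field_simp
end
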